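/- Let r0 > 0 and let u_ε : ℝ² → ℝ be defined by u_ε(x) = log(ε²/((ε² + ‖x‖²)²)) for ε > 0. There exists a constant C > 0 such that for every ε ∈ (0,1], |∫_B ‖∇u_ε(x)‖² dx − 16π·log(1/ε²)| ≤ C. -/

import Mathlib

open Real MeasureTheory Set InnerProductSpace

/-- The Liouville bubble u_ε on ℝ². -/
noncomputable def bubble (ε : ℝ) (x : EuclideanSpace ℝ (Fin 2)) : ℝ :=
  Real.log (ε ^ 2 / (ε ^ 2 + ‖x‖ ^ 2) ^ 2)

lemma grad_bubble {ε : ℝ} (hε : 0 < ε) (x : EuclideanSpace ℝ (Fin 2)) :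
    HasGradientAt (bubble ε) ((-4 / (ε ^ 2 + ‖x‖ ^ 2)) • x) x := by
  have hpos : ∀ y : EuclideanSpace ℝ (Fin 2), 0 < ε ^ 2 + ‖y‖ ^ 2 := fun y =>
    add_pos_of_pos_of_nonneg (pow_pos hε 2) (by positivity)
  have hb : bubble ε = fun y => Real.log (ε ^ 2) - 2 * Real.log (ε ^ 2 + ‖y‖ ^ 2) := by
    funext y
    rw [bubble, Real.log_div (by positivity) (by positivity), Real.log_pow]
    norm_num
  rw [hasGradientAt_iff_hasFDerivAt, hb]
  have hinner : HasFDerivAt (fun y : EuclideanSpace ℝ (Fin 2) => ε ^ 2 + ‖y‖ ^ 2)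
      ((fderivInnerCLM ℝ (x, x)).comp ((ContinuousLinearMap.id ℝ _).prod
        (ContinuousLinearMap.id ℝ _))) x := by
    have h1 : HasFDerivAt (fun y : EuclideanSpace ℝ (Fin 2) => (inner ℝ y y : ℝ))
        ((fderivInnerCLM ℝ (x, x)).comp ((ContinuousLinearMap.id ℝ _).prod
          (ContinuousLinearMap.id ℝ _))) x :=
      (hasFDerivAt_id x).inner ℝ (hasFDerivAt_id x)
    have heq : (fun y : EuclideanSpace ℝ (Fin 2) => ε ^ 2 + ‖y‖ ^ 2)
        = fun y => ε ^ 2 + (inner ℝ y y : ℝ) := by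
      funext y; rw [real_inner_self_eq_norm_sq]
    rw [heq]
    exact h1.const_add (ε ^ 2)
  have hlog := (Real.hasDerivAt_log (hpos x).ne').comp_hasFDerivAt x hinner
  have hfull := (hlog.const_mul 2).const_sub (Real.log (ε ^ 2))
  have heq : (toDual ℝ (EuclideanSpace ℝ (Fin 2))) ((-4 / (ε ^ 2 + ‖x‖ ^ 2)) • x)
      = -((2:ℝ) • (ε ^ 2 + ‖x‖ ^ 2)⁻¹ •
        (fderivInnerCLM ℝ (x, x)).comp ((ContinuousLinearMap.id ℝ _).prod
          (ContinuousLinearMap.id ℝ _))) := by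
    ext v
    simp [toDual_apply_apply, fderivInnerCLM_apply, real_inner_smul_left, real_inner_comm]
    field_simp
    ring
  rw [heq]
  exact hfull

-- 1D FTC piece
lemma ftc_piece {ε : ℝ} (hε : 0 < ε) (r0 : ℝ) (hr : 0 < r0) :
    ∫ y in (0:ℝ)..r0, y * (16 * y ^ 2 / (ε ^ 2 + y ^ 2) ^ 2) =
      8 * (Real.log (ε ^ 2 + r0 ^ 2) + ε ^ 2 / (ε ^ 2 + r0 ^ 2))
        - 8 * (Real.log (ε ^ 2) + 1) := by
  have hA : ∀ y : ℝ, 0 < ε ^ 2 + y ^ 2 := fun y => by positivity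
  have key : ∀ y : ℝ, HasDerivAt
      (fun t => 8 * (Real.log (ε ^ 2 + t ^ 2) + ε ^ 2 / (ε ^ 2 + t ^ 2)))
      (y * (16 * y ^ 2 / (ε ^ 2 + y ^ 2) ^ 2)) y := by
    intro y
    have h1 : HasDerivAt (fun t : ℝ => ε ^ 2 + t ^ 2) (2 * y) y := by
      simpa using (hasDerivAt_pow 2 y).const_add (ε ^ 2)
    have hlog := h1.log (hA y).ne'
    have hdiv := (hasDerivAt_const y (ε ^ 2)).div h1 (hA y).ne'
    have := (hlog.add hdiv).const_mul 8
    refine this.congr_deriv ?_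
    field_simp
    ring
  rw [intervalIntegral.integral_eq_sub_of_hasDerivAt (fun y _ => key y) ?_]
  · norm_num [div_self (pow_pos hε 2).ne']
  · apply Continuous.intervalIntegrable
    exact continuous_id.mul ((continuous_const.mul (continuous_pow 2)).div
      ((continuous_const.add (continuous_pow 2)).pow 2) (fun y => (pow_pos (hA y) 2).ne'))

lemma radial_reduce {ε : ℝ} (hε : 0 < ε) {r0 : ℝ} (hr : 0 < r0) :
    ∫ x in Metric.ball (0 : EuclideanSpace ℝ (Fin 2)) r0,
        16 * ‖x‖ ^ 2 / (ε ^ 2 + ‖x‖ ^ 2) ^ 2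
      = 2 * π * ∫ y in (0:ℝ)..r0, y * (16 * y ^ 2 / (ε ^ 2 + y ^ 2) ^ 2) := by
  set G : ℝ → ℝ := Set.indicator (Iio r0) (fun y => 16 * y ^ 2 / (ε ^ 2 + y ^ 2) ^ 2) with hG
  have h1 : ∫ x in Metric.ball (0 : EuclideanSpace ℝ (Fin 2)) r0,
      16 * ‖x‖ ^ 2 / (ε ^ 2 + ‖x‖ ^ 2) ^ 2 = ∫ x : EuclideanSpace ℝ (Fin 2), G ‖x‖ := by
    rw [← integral_indicator measurableSet_ball]
    congr 1
    funext x
    simp [hG, Set.indicator, mem_ball_zero_iff]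
  rw [h1, integral_fun_norm_addHaar volume G]
  have hdim : Module.finrank ℝ (EuclideanSpace ℝ (Fin 2)) = 2 := finrank_euclideanSpace_fin
  rw [hdim]
  have hvol : (volume (Metric.ball (0 : EuclideanSpace ℝ (Fin 2)) 1)).toReal = π := by
    rw [EuclideanSpace.volume_ball]
    norm_num [Real.Gamma_two, Real.sq_sqrt Real.pi_nonneg, ENNReal.toReal_ofReal Real.pi_nonneg]
  rw [show volume.real (Metric.ball (0 : EuclideanSpace ℝ (Fin 2)) 1) = π from hvol]
  have h2 : (fun y : ℝ => y ^ (2 - 1) • G y)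
      = Set.indicator (Iio r0) (fun y => y * (16 * y ^ 2 / (ε ^ 2 + y ^ 2) ^ 2)) := by
    funext y
    simp only [hG, Set.indicator, pow_one, smul_eq_mul]
    split_ifs <;> simp
  rw [h2, setIntegral_indicator measurableSet_Iio, Set.Ioi_inter_Iio,
    ← MeasureTheory.integral_Ioc_eq_integral_Ioo,
    ← intervalIntegral.integral_of_le hr.le]
  rw [nsmul_eq_mul, smul_eq_mul]
  push_cast
  ring


/-- Dirichlet energy expansion ∫_B ‖∇u_ε‖² = 16π log(1/ε²) + O(1). -/
theorem stmt_10 (r0 : ℝ) (hr : 0 < r0) :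
    ∃ C > 0, ∀ ε ∈ Set.Ioc (0:ℝ) 1,
      |(∫ x in Metric.ball (0 : EuclideanSpace ℝ (Fin 2)) r0,
          ‖gradient (bubble ε) x‖ ^ 2) - 16 * π * Real.log (1 / ε ^ 2)| ≤ C := by
  refine ⟨16 * π * (|Real.log (r0 ^ 2)| + |Real.log (r0 ^ 2 + 1)| + 2), by positivity, ?_⟩
  rintro ε ⟨hε, hε1⟩
  have hA : ∀ y : ℝ, 0 < ε ^ 2 + y ^ 2 := fun y => by positivity
  have hAr : 0 < ε ^ 2 + r0 ^ 2 := hA r0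
  -- pointwise gradient norm
  have hfun : ∀ x : EuclideanSpace ℝ (Fin 2),
      ‖gradient (bubble ε) x‖ ^ 2 = 16 * ‖x‖ ^ 2 / (ε ^ 2 + ‖x‖ ^ 2) ^ 2 := by
    intro x
    have hApos : (0:ℝ) < ε ^ 2 + ‖x‖ ^ 2 := by positivity
    rw [(grad_bubble hε x).gradient, norm_smul, Real.norm_eq_abs, mul_pow, sq_abs,
      div_pow, neg_pow]
    field_simp
    ring
  have hint : (∫ x in Metric.ball (0 : EuclideanSpace ℝ (Fin 2)) r0,
      ‖gradient (bubble ε) x‖ ^ 2)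
      = ∫ x in Metric.ball (0 : EuclideanSpace ℝ (Fin 2)) r0,
        16 * ‖x‖ ^ 2 / (ε ^ 2 + ‖x‖ ^ 2) ^ 2 :=
    setIntegral_congr_fun measurableSet_ball (fun x _ => hfun x)
  rw [hint, radial_reduce hε hr, ftc_piece hε r0 hr]
  have hlog1 : Real.log (1 / ε ^ 2) = -Real.log (ε ^ 2) := by
    rw [one_div, Real.log_inv]
  rw [hlog1]
  have key : 2 * π * (8 * (Real.log (ε ^ 2 + r0 ^ 2) + ε ^ 2 / (ε ^ 2 + r0 ^ 2))
        - 8 * (Real.log (ε ^ 2) + 1)) - 16 * π * -Real.log (ε ^ 2)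
      = 16 * π * (Real.log (ε ^ 2 + r0 ^ 2) + (ε ^ 2 / (ε ^ 2 + r0 ^ 2) - 1)) := by ring
  rw [key, abs_mul, abs_of_nonneg (by positivity : (0:ℝ) ≤ 16 * π)]
  have h1 : |Real.log (ε ^ 2 + r0 ^ 2)| ≤ |Real.log (r0 ^ 2)| + |Real.log (r0 ^ 2 + 1)| := by
    have hl : Real.log (r0 ^ 2) ≤ Real.log (ε ^ 2 + r0 ^ 2) :=
      Real.log_le_log (by positivity) (by nlinarith)
    have hu : Real.log (ε ^ 2 + r0 ^ 2) ≤ Real.log (r0 ^ 2 + 1) :=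
      Real.log_le_log hAr (by nlinarith)
    rw [abs_le]
    constructor
    · have := neg_abs_le (Real.log (r0 ^ 2))
      have := abs_nonneg (Real.log (r0 ^ 2 + 1))
      linarith
    · exact hu.trans ((le_abs_self _).trans (by linarith [abs_nonneg (Real.log (r0^2))]))
  have h2 : |ε ^ 2 / (ε ^ 2 + r0 ^ 2) - 1| ≤ 1 := by
    have h0 : 0 ≤ ε ^ 2 / (ε ^ 2 + r0 ^ 2) := by positivity
    have h1' : ε ^ 2 / (ε ^ 2 + r0 ^ 2) ≤ 1 := by
      rw [div_le_one hAr]; nlinarith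
    rw [abs_le]; constructor <;> linarith
  have := abs_add_le (Real.log (ε ^ 2 + r0 ^ 2)) (ε ^ 2 / (ε ^ 2 + r0 ^ 2) - 1)
  have hπ : (0:ℝ) ≤ 16 * π := by positivity
  calc 16 * π * |Real.log (ε ^ 2 + r0 ^ 2) + (ε ^ 2 / (ε ^ 2 + r0 ^ 2) - 1)|
      ≤ 16 * π * (|Real.log (r0 ^ 2)| + |Real.log (r0 ^ 2 + 1)| + 1) := by
        apply mul_le_mul_of_nonneg_left _ hπ
        calc _ ≤ _ := this
          _ ≤ _ := by linarith
    _ ≤ _ := by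
        apply mul_le_mul_of_nonneg_left _ hπ
        linarith
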